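/- Let n ≥ 2 be an integer and suppose A ⊆ {1,...,n} satisfies: |A ∩ {1,...,⌊n/2⌋}| = k with A ∩ {1,...,⌊n/2⌋} = {δ₁,...,δ_k}, every δᵢ satisfies 2δᵢ ≤ n and 2δᵢ ∈ {⌊n/2⌋+1,...,n}, and {⌊n/2⌋+1,...,n} \ A ⊆ {2δ₁,...,2δ_k}. Then the number of 2-colourings of A with no monochromatic Schur triple is at most 2^⌈n/2⌉. -/

import Mathlib

/-- Suppose `A ⊆ {1,...,n}` has `A ∩ {1,...,⌊n/2⌋} = {δ₁,...,δ_k}` with each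
`2δᵢ ∈ {⌊n/2⌋+1,...,n}`, and every element of `{⌊n/2⌋+1,...,n}` missing from
`A` is one of the `2δᵢ`. Then the number of 2-colourings of `A` with no
monochromatic Schur triple is at most `2^⌈n/2⌉`. -/
theorem colourings_near_I2_bound (n : ℕ) (hn : 2 ≤ n) (A : Finset ℕ)
    (hA : A ⊆ Finset.Icc 1 n) (k : ℕ)
    (hk : (A ∩ Finset.Icc 1 (n / 2)).card = k)
    (hdouble : ∀ d ∈ A ∩ Finset.Icc 1 (n / 2), 2 * d ∈ Finset.Icc (n / 2 + 1) n)
    (hmiss : Finset.Icc (n / 2 + 1) n \ A ⊆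
      (A ∩ Finset.Icc 1 (n / 2)).image (fun d => 2 * d)) :
    (Finset.univ.filter (fun σ : A → Fin 2 =>
      ∀ x y z : A, σ x = σ y → σ y = σ z → (x : ℕ) + (y : ℕ) ≠ (z : ℕ))).card
      ≤ 2 ^ ((n + 1) / 2) := by
  classical
  set D := A ∩ Finset.Icc 1 (n / 2) with hD
  set P := D.filter (fun d => 2 * d ∈ A) with hP
  set S := A \ P.image (fun d => 2 * d) with hS
  -- membership facts
  have hPD : P ⊆ D := Finset.filter_subset _ _
  have hDA : D ⊆ A := Finset.inter_subset_left
  have hDle : ∀ d ∈ D, d ≤ n / 2 := by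
    intro d hd
    have := (Finset.mem_inter.mp hd).2
    exact (Finset.mem_Icc.mp this).2
  -- elements of D are in S (not a double)
  have hDS : ∀ d ∈ D, d ∈ S := by
    intro d hd
    rw [hS, Finset.mem_sdiff]
    refine ⟨hDA hd, ?_⟩
    intro hmem
    obtain ⟨d', hd', hdd⟩ := Finset.mem_image.mp hmem
    have h1 := hdouble d' (hPD hd')
    have h2 := (Finset.mem_Icc.mp h1).1
    have h3 := hDle d hd
    omega
  -- Step 2: counting
  have hbound : S.card ≤ (n + 1) / 2 := by
    have hinj : Set.InjOn (fun d => 2 * d) P := by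
      intro x _ y _ h; simp only at h; omega
    have himg : P.image (fun d => 2 * d) ⊆ A := by
      intro x hx
      obtain ⟨d, hd, rfl⟩ := Finset.mem_image.mp hx
      exact (Finset.mem_filter.mp hd).2
    have hScard : S.card = A.card - P.card := by
      rw [hS, Finset.card_sdiff_of_subset himg, Finset.card_image_of_injOn hinj]
    have hPle : P.card ≤ D.card := Finset.card_le_card hPD
    -- split A
    have hsplit : A.card = D.card + (A ∩ Finset.Icc (n / 2 + 1) n).card := by
      rw [hD]
      rw [← Finset.card_union_of_disjoint]
      · congr 1
        ext x
        simp only [Finset.mem_union, Finset.mem_inter, Finset.mem_Icc]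
        constructor
        · intro hx
          have hx1 := Finset.mem_Icc.mp (hA hx)
          by_cases hle : x ≤ n / 2
          · exact Or.inl ⟨hx, hx1.1, hle⟩
          · exact Or.inr ⟨hx, by omega, hx1.2⟩
        · rintro (⟨h, _⟩ | ⟨h, _⟩) <;> exact h
      · rw [Finset.disjoint_left]
        intro x hx hx'
        have h1 := (Finset.mem_Icc.mp (Finset.mem_inter.mp hx).2).2
        have h2 := (Finset.mem_Icc.mp (Finset.mem_inter.mp hx').2).1
        omega
    -- upper interval
    have hupper : (Finset.Icc (n / 2 + 1) n).card = (n + 1) / 2 := by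
      rw [Nat.card_Icc]; omega
    have hup2 : (A ∩ Finset.Icc (n / 2 + 1) n).card
        + (Finset.Icc (n / 2 + 1) n \ A).card = (n + 1) / 2 := by
      rw [← hupper, Finset.inter_comm]
      exact Finset.card_inter_add_card_sdiff _ _
    -- missing elements bound
    have hmissb : D.card - P.card ≤ (Finset.Icc (n / 2 + 1) n \ A).card := by
      have hmap : (D \ P).image (fun d => 2 * d) ⊆ Finset.Icc (n / 2 + 1) n \ A := by
        intro x hx
        obtain ⟨d, hd, rfl⟩ := Finset.mem_image.mp hx
        have hd1 := (Finset.mem_sdiff.mp hd).1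
        have hd2 := (Finset.mem_sdiff.mp hd).2
        rw [Finset.mem_sdiff]
        refine ⟨hdouble d hd1, ?_⟩
        intro hcon
        exact hd2 (Finset.mem_filter.mpr ⟨hd1, hcon⟩)
      have := Finset.card_le_card hmap
      rw [Finset.card_image_of_injOn (by intro x _ y _ h; simp only at h; omega)] at this
      rw [Finset.card_sdiff_of_subset hPD] at this
      exact this
    omega
  -- Step 1: injection into colourings of S
  have key : (Finset.univ.filter (fun σ : A → Fin 2 =>
      ∀ x y z : A, σ x = σ y → σ y = σ z → (x : ℕ) + (y : ℕ) ≠ (z : ℕ))).card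
      ≤ 2 ^ S.card := by
    have hcard : ((Finset.univ : Finset (S → Fin 2))).card = 2 ^ S.card := by
      simp [Finset.card_univ]
    rw [← hcard]
    apply Finset.card_le_card_of_injOn
      (fun σ => fun s : S => σ ⟨s.1, (Finset.mem_sdiff.mp s.2).1⟩)
    · intro σ _; exact Finset.mem_univ _
    · intro σ hσ τ hτ hst
      simp only [Finset.coe_filter, Set.mem_setOf_eq, Finset.mem_univ, true_and] at hσ hτ
      funext a
      by_cases ha : (a : ℕ) ∈ S
      · have := congrFun hst ⟨a.1, ha⟩
        simpa using this
      · -- a = 2d for some d ∈ P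
        have haA : (a : ℕ) ∈ A := a.2
        have : (a : ℕ) ∈ P.image (fun d => 2 * d) := by
          rw [hS, Finset.mem_sdiff] at ha
          tauto
        obtain ⟨d, hdP, hda⟩ := Finset.mem_image.mp this
        have hdA : d ∈ A := hDA (hPD hdP)
        have hdS : d ∈ S := hDS d (hPD hdP)
        set dl : A := ⟨d, hdA⟩ with hdl
        have hστd : σ dl = τ dl := by
          have := congrFun hst ⟨d, hdS⟩
          simpa using this
        have haval : d + d = (a : ℕ) := by omega
        have hσne : σ a ≠ σ dl := by
          intro h
          exact hσ dl dl a rfl h.symm haval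
        have hτne : τ a ≠ τ dl := by
          intro h
          exact hτ dl dl a rfl h.symm haval
        have := hστd
        omega
  exact key.trans (Nat.pow_le_pow_right (by norm_num) hbound)
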